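/- arXiv:2011.05761 — 6 statements merged into one kernel-verified Lean document; each statement's English description precedes it below -/
import Mathlib

section
/- Let n < m and 0 < p̃₁ ≤ ⋯ ≤ p̃_m. Suppose the set J = { i : p̃_i < n / (∑_{k=1}^m 1/p̃_k) } is nonempty. Then the set H = { j ∈ {1,…,m} : p̃_j ∑_{k=j+1}^m 1/p̃_k < n − j } is nonempty, its maximum d satisfies card(J) ≤ d ≤ n − 1, and p̃_d < (n − d)/(∑_{k=d+1}^m 1/p̃_k) ≤ p̃_{d+1}. -/
/-- Existence and properties of the index `d` when the condition (H) fails for a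
nonempty set of indices. -/
theorem index_d_exists {m n : ℕ} (hn : 0 < n) (hnm : n < m) (q : ℕ → ℝ)
    (hq0 : ∀ i ∈ Finset.Icc 1 m, 0 < q i)
    (hmono : ∀ i ∈ Finset.Icc 1 m, ∀ j ∈ Finset.Icc 1 m, i ≤ j → q i ≤ q j)
    (hJ : ((Finset.Icc 1 m).filter
        (fun i => q i < (n : ℝ) / ∑ k ∈ Finset.Icc 1 m, 1 / q k)).Nonempty) :
    ∃ d ∈ (Finset.Icc 1 m).filter
        (fun j => q j * ∑ k ∈ Finset.Icc (j + 1) m, 1 / q k < (n : ℝ) - j),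
      (∀ j ∈ (Finset.Icc 1 m).filter
          (fun j => q j * ∑ k ∈ Finset.Icc (j + 1) m, 1 / q k < (n : ℝ) - j), j ≤ d) ∧
      ((Finset.Icc 1 m).filter
        (fun i => q i < (n : ℝ) / ∑ k ∈ Finset.Icc 1 m, 1 / q k)).card ≤ d ∧
      d ≤ n - 1 ∧
      q d < ((n : ℝ) - d) / (∑ k ∈ Finset.Icc (d + 1) m, 1 / q k) ∧
      ((n : ℝ) - d) / (∑ k ∈ Finset.Icc (d + 1) m, 1 / q k) ≤ q (d + 1) := by
  classical
  have hm1 : 1 ≤ m := by omega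
  set S := ∑ k ∈ Finset.Icc 1 m, 1 / q k with hSdef
  have hS : 0 < S :=
    Finset.sum_pos (fun k hk => one_div_pos.mpr (hq0 k hk))
      ⟨1, Finset.mem_Icc.mpr ⟨le_refl 1, hm1⟩⟩
  -- basic Icc/Ioc conversion
  have hIoc : ∀ a b : ℕ, Finset.Icc (a + 1) b = Finset.Ioc a b := by
    intro a b; ext x; simp [Finset.mem_Icc, Finset.mem_Ioc]
  have hIoc1 : ∀ b : ℕ, Finset.Icc 1 b = Finset.Ioc 0 b := by
    intro b; ext x; simp [Finset.mem_Icc, Finset.mem_Ioc]; omega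
  have hsplit : ∀ j : ℕ, j ≤ m →
      (∑ k ∈ Finset.Icc 1 j, 1 / q k) + ∑ k ∈ Finset.Icc (j + 1) m, 1 / q k = S := by
    intro j hj
    rw [hSdef, hIoc1, hIoc1, hIoc]
    exact Finset.sum_Ioc_consecutive _ (Nat.zero_le j) hj
  set J := (Finset.Icc 1 m).filter (fun i => q i < (n : ℝ) / S) with hJdef
  set i₀ := J.max' hJ with hi₀def
  have hi₀J : i₀ ∈ J := J.max'_mem hJ
  have hi₀mem := Finset.mem_filter.mp hi₀J
  have hi₀m := Finset.mem_Icc.mp hi₀mem.1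
  have hqi₀ : q i₀ < (n : ℝ) / S := hi₀mem.2
  have hJiff : ∀ j, j ∈ J ↔ 1 ≤ j ∧ j ≤ i₀ := by
    intro j
    constructor
    · intro hj
      exact ⟨(Finset.mem_Icc.mp (Finset.mem_filter.mp hj).1).1, J.le_max' j hj⟩
    · rintro ⟨h1, h2⟩
      have hjm : j ∈ Finset.Icc 1 m := Finset.mem_Icc.mpr ⟨h1, h2.trans hi₀m.2⟩
      exact Finset.mem_filter.mpr ⟨hjm,
        lt_of_le_of_lt (hmono j hjm i₀ hi₀mem.1 h2) hqi₀⟩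
  have hcard : J.card = i₀ := by
    have hJeq : J = Finset.Icc 1 i₀ := Finset.ext fun j => by
      rw [hJiff, Finset.mem_Icc]
    rw [hJeq, Nat.card_Icc]; omega
  -- the key predicate
  set Hs := (Finset.Icc 1 m).filter
      (fun j => q j * ∑ k ∈ Finset.Icc (j + 1) m, 1 / q k < (n : ℝ) - j) with hHdef
  -- i₀ ∈ Hs
  have hi₀H : i₀ ∈ Hs := by
    refine Finset.mem_filter.mpr ⟨hi₀mem.1, ?_⟩
    have hlow : (i₀ : ℝ) ≤ q i₀ * ∑ k ∈ Finset.Icc 1 i₀, 1 / q k := by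
      have h1 : ∀ k ∈ Finset.Icc 1 i₀, (1 : ℝ) ≤ q i₀ * (1 / q k) := by
        intro k hk
        have hkm : k ∈ Finset.Icc 1 m := by
          have := Finset.mem_Icc.mp hk
          exact Finset.mem_Icc.mpr ⟨this.1, this.2.trans hi₀m.2⟩
        have hkpos := hq0 k hkm
        have hle := hmono k hkm i₀ hi₀mem.1 (Finset.mem_Icc.mp hk).2
        rw [mul_one_div, le_div_iff₀ hkpos, one_mul]
        exact hle
      calc (i₀ : ℝ) = ∑ _k ∈ Finset.Icc 1 i₀, (1 : ℝ) := by
            simp [Nat.card_Icc]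
        _ ≤ ∑ k ∈ Finset.Icc 1 i₀, q i₀ * (1 / q k) := Finset.sum_le_sum h1
        _ = q i₀ * ∑ k ∈ Finset.Icc 1 i₀, 1 / q k := by rw [Finset.mul_sum]
    have hSlt : q i₀ * S < (n : ℝ) := (lt_div_iff₀ hS).mp hqi₀
    have hsp := hsplit i₀ hi₀m.2
    have : q i₀ * ∑ k ∈ Finset.Icc (i₀ + 1) m, 1 / q k
        = q i₀ * S - q i₀ * ∑ k ∈ Finset.Icc 1 i₀, 1 / q k := by
      rw [← hsp]; ring
    rw [this]
    linarith
  have hHne : Hs.Nonempty := ⟨i₀, hi₀H⟩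
  set d := Hs.max' hHne with hddef
  have hdH : d ∈ Hs := Hs.max'_mem hHne
  have hdmem := Finset.mem_filter.mp hdH
  have hdm := Finset.mem_Icc.mp hdmem.1
  have hdlt : q d * ∑ k ∈ Finset.Icc (d + 1) m, 1 / q k < (n : ℝ) - d := hdmem.2
  have hdlem : d < m := by
    by_contra h
    have : d = m := by omega
    rw [this] at hdlt
    rw [Finset.Icc_eq_empty (by omega)] at hdlt
    simp at hdlt
    have : (m : ℝ) < (n : ℝ) := by linarith
    exact absurd (Nat.cast_lt.mp this) (by omega)
  have hTpos : 0 < ∑ k ∈ Finset.Icc (d + 1) m, 1 / q k := by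
    refine Finset.sum_pos (fun k hk => one_div_pos.mpr (hq0 k ?_))
      ⟨d + 1, Finset.mem_Icc.mpr ⟨le_refl _, by omega⟩⟩
    have := Finset.mem_Icc.mp hk
    exact Finset.mem_Icc.mpr ⟨by omega, this.2⟩
  have hdn : d < n := by
    have hq_d : 0 < q d := hq0 d hdmem.1
    have : (0 : ℝ) < (n : ℝ) - d := lt_trans (mul_pos hq_d hTpos) hdlt
    have : (d : ℝ) < n := by linarith
    exact_mod_cast this
  refine ⟨d, hdH, fun j hj => Hs.le_max' j hj, ?_, by omega, ?_, ?_⟩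
  · rw [hcard]; exact Hs.le_max' i₀ hi₀H
  · exact (lt_div_iff₀ hTpos).mpr hdlt
  · -- maximality at d+1
    have hd1m : d + 1 ∈ Finset.Icc 1 m := Finset.mem_Icc.mpr ⟨by omega, by omega⟩
    have hd1notH : d + 1 ∉ Hs := fun h => by
      have := Hs.le_max' (d + 1) h
      omega
    have hd1ge : (n : ℝ) - (d + 1 : ℕ) ≤
        q (d + 1) * ∑ k ∈ Finset.Icc (d + 1 + 1) m, 1 / q k := by
      by_contra h
      exact hd1notH (Finset.mem_filter.mpr ⟨hd1m, lt_of_not_ge h⟩)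
    have hq_d1 : 0 < q (d + 1) := hq0 (d + 1) hd1m
    have hsplit2 : (1 / q (d + 1)) + ∑ k ∈ Finset.Icc (d + 1 + 1) m, 1 / q k
        = ∑ k ∈ Finset.Icc (d + 1) m, 1 / q k := by
      rw [hIoc, hIoc, ← Finset.sum_Ioc_consecutive (fun k => 1 / q k)
        (Nat.le_succ d) (by omega : d + 1 ≤ m)]
      congr 1
      rw [Nat.Ioc_succ_singleton]
      simp
    rw [div_le_iff₀ hTpos]
    have hcast : ((d + 1 : ℕ) : ℝ) = (d : ℝ) + 1 := by push_cast; ring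
    rw [hcast] at hd1ge
    have : q (d + 1) * ∑ k ∈ Finset.Icc (d + 1) m, 1 / q k
        = 1 + q (d + 1) * ∑ k ∈ Finset.Icc (d + 1 + 1) m, 1 / q k := by
      rw [← hsplit2, mul_add, mul_one_div, div_self (ne_of_gt hq_d1)]
    linarith
end

section
/- Let n < m, 0 < p̃₁ ≤ ⋯ ≤ p̃_m, and let d ∈ {1,…,n−1} satisfy p̃_d < (n−d)/(∑_{k=d+1}^m 1/p̃_k) ≤ p̃_{d+1}. Then the minimum of max_{1≤i≤m} p̃_i a_i over a₁,…,a_m ∈ [0,1] with ∑_{i=1}^m a_i = n equals (n − d)/(∑_{k=d+1}^m 1/p̃_k). -/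
/-- With the index `d` as specified, the minimum of `max_i p̃_i a_i` over `a ∈ [0,1]^m`
with `∑ a_i = n` equals `(n - d)/∑_{k=d+1}^m 1/p̃_k`. -/
theorem min_with_index_d {m n d : ℕ} (hn : 0 < n) (hnm : n < m)
    (hd1 : 1 ≤ d) (hdn : d ≤ n - 1) (q : ℕ → ℝ)
    (hq0 : ∀ i ∈ Finset.Icc 1 m, 0 < q i)
    (hmono : ∀ i ∈ Finset.Icc 1 m, ∀ j ∈ Finset.Icc 1 m, i ≤ j → q i ≤ q j)
    (hlt : q d < ((n : ℝ) - d) / (∑ k ∈ Finset.Icc (d + 1) m, 1 / q k))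
    (hge : ((n : ℝ) - d) / (∑ k ∈ Finset.Icc (d + 1) m, 1 / q k) ≤ q (d + 1)) :
    IsLeast
      {v : ℝ | ∃ a : ℕ → ℝ, (∀ i ∈ Finset.Icc 1 m, a i ∈ Set.Icc (0 : ℝ) 1) ∧
        (∑ i ∈ Finset.Icc 1 m, a i) = (n : ℝ) ∧
        v = (Finset.Icc 1 m).sup'
              (Finset.nonempty_Icc.mpr (by omega))
              (fun i => q i * a i)}
      (((n : ℝ) - d) / (∑ k ∈ Finset.Icc (d + 1) m, 1 / q k)) := by
  have hdm : d + 1 ≤ m := by omega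
  have hdn' : d + 1 ≤ n := by omega
  have hsub : Finset.Icc (d + 1) m ⊆ Finset.Icc 1 m := by
    intro k hk; simp only [Finset.mem_Icc] at hk ⊢; omega
  set S : ℝ := ∑ k ∈ Finset.Icc (d + 1) m, 1 / q k with hSdef
  have hSpos : 0 < S :=
    Finset.sum_pos (fun k hk => by
      have := hq0 k (hsub hk); positivity)
      ⟨d + 1, Finset.mem_Icc.mpr ⟨le_refl _, hdm⟩⟩
  set v : ℝ := ((n : ℝ) - d) / S with hvdef
  have hndpos : (0 : ℝ) < (n : ℝ) - d := by
    have : (d : ℝ) < n := by exact_mod_cast (by omega : d < n)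
    linarith
  have hvpos : 0 < v := div_pos hndpos hSpos
  have hvS : v * S = (n : ℝ) - d := div_mul_cancel₀ _ (ne_of_gt hSpos)
  have hqd1m : d + 1 ∈ Finset.Icc 1 m := Finset.mem_Icc.mpr ⟨by omega, hdm⟩
  have hqdm : d ∈ Finset.Icc 1 m := Finset.mem_Icc.mpr ⟨hd1, by omega⟩
  -- split lemma
  have hsplit : ∀ f : ℕ → ℝ, (∑ i ∈ Finset.Icc 1 m, f i)
      = (∑ i ∈ Finset.Icc 1 d, f i) + ∑ i ∈ Finset.Icc (d + 1) m, f i := by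
    intro f
    rw [show Finset.Icc 1 m = Finset.Ioc 0 m from (Finset.Icc_add_one_left_eq_Ioc 0 m).symm,
        show Finset.Icc 1 d = Finset.Ioc 0 d from (Finset.Icc_add_one_left_eq_Ioc 0 d).symm,
        show Finset.Icc (d + 1) m = Finset.Ioc d m from Finset.Icc_add_one_left_eq_Ioc d m,
        Finset.sum_Ioc_consecutive _ (Nat.zero_le d) (by omega : d ≤ m)]
  constructor
  · -- membership
    refine ⟨fun i => if i ≤ d then 1 else v / q i, ?_, ?_, ?_⟩
    · intro i hi
      by_cases h : i ≤ d
      · simp [h]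
      · simp only [h, if_false]
        have hqi := hq0 i hi
        have hvq : v ≤ q i := le_trans hge (hmono (d + 1) hqd1m i hi (by omega))
        exact ⟨le_of_lt (div_pos hvpos hqi), (div_le_one hqi).mpr hvq⟩
    · rw [hsplit]
      have h1 : (∑ i ∈ Finset.Icc 1 d, (if i ≤ d then (1 : ℝ) else v / q i)) = d := by
        have he : ∀ i ∈ Finset.Icc 1 d, (if i ≤ d then (1 : ℝ) else v / q i) = 1 :=
          fun i hi => by simp [(Finset.mem_Icc.mp hi).2]
        rw [Finset.sum_congr rfl he]; simp
      have h2 : (∑ i ∈ Finset.Icc (d + 1) m, (if i ≤ d then (1 : ℝ) else v / q i))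
          = v * S := by
        rw [hSdef, Finset.mul_sum, Finset.sum_congr rfl (fun i hi => ?_)]
        have : ¬ i ≤ d := by have := (Finset.mem_Icc.mp hi).1; omega
        simp [this, div_eq_mul_inv, mul_comm]
      rw [h1, h2, hvS]; ring
    · refine le_antisymm ?_ (Finset.sup'_le _ _ fun i hi => ?_)
      · have := Finset.le_sup' (f := fun i => q i * (if i ≤ d then (1:ℝ) else v / q i))
          (b := d + 1) hqd1m
        simpa [show ¬ d + 1 ≤ d by omega,
          mul_div_cancel₀ _ (ne_of_gt (hq0 _ hqd1m)), -Finset.le_sup'_iff] using this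
      · by_cases h : i ≤ d
        · simp only [h, if_true, mul_one]
          exact le_trans (hmono i hi d hqdm h) (le_of_lt hlt)
        · simp only [h, if_false]
          rw [mul_div_cancel₀ _ (ne_of_gt (hq0 i hi))]
  · -- lower bound
    rintro w ⟨a, ha, hsum, rfl⟩
    set M := (Finset.Icc 1 m).sup' (Finset.nonempty_Icc.mpr (by omega))
      (fun i => q i * a i) with hM
    rw [hvdef] at *
    rw [div_le_iff₀ hSpos]
    have h1 : (∑ i ∈ Finset.Icc 1 d, a i) ≤ (d : ℝ) := by
      calc (∑ i ∈ Finset.Icc 1 d, a i) ≤ ∑ i ∈ Finset.Icc 1 d, (1 : ℝ) :=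
            Finset.sum_le_sum fun i hi => (ha i (by
              have := Finset.mem_Icc.mp hi
              exact Finset.mem_Icc.mpr ⟨this.1, by omega⟩)).2
        _ = d := by simp
    have h2 : (∑ i ∈ Finset.Icc (d + 1) m, a i) ≤ M * S := by
      rw [hSdef, Finset.mul_sum]
      refine Finset.sum_le_sum fun i hi => ?_
      have hqi := hq0 i (hsub hi)
      have hMi : q i * a i ≤ M := Finset.le_sup' (fun i => q i * a i) (hsub hi)
      rw [mul_one_div, le_div_iff₀ hqi, mul_comm]
      exact hMi
    have := hsplit a
    rw [hsum] at this
    linarith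
end

section
/- Let n < m, 0 < p̃₁ ≤ ⋯ ≤ p̃_m, and d with p̃_d < (n−d)/(∑_{k=d+1}^m 1/p̃_k) ≤ p̃_{d+1}, 1 ≤ d ≤ n−1. Suppose a₁,…,a_m ∈ [0,1] with ∑ a_i = n achieve max_i p̃_i a_i = (n−d)/(∑_{k=d+1}^m 1/p̃_k). Then a_i = 1 for all i ≤ d and a_i = (n−d)/(p̃_i ∑_{k=d+1}^m 1/p̃_k) for all i > d. -/
/-- Characterization of optimizers: if `a ∈ [0,1]^m`, `∑ a_i = n` and
`max_i p̃_i a_i = (n - d)/∑_{k=d+1}^m 1/p̃_k`, then `a_i = 1` for `i ≤ d` and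
`a_i = (n - d)/(p̃_i ∑_{k=d+1}^m 1/p̃_k)` for `i > d`. -/
theorem optimizers_characterization {m n d : ℕ} (hn : 0 < n) (hnm : n < m)
    (hd1 : 1 ≤ d) (hdn : d ≤ n - 1) (q : ℕ → ℝ)
    (hq0 : ∀ i ∈ Finset.Icc 1 m, 0 < q i)
    (hmono : ∀ i ∈ Finset.Icc 1 m, ∀ j ∈ Finset.Icc 1 m, i ≤ j → q i ≤ q j)
    (hlt : q d < ((n : ℝ) - d) / (∑ k ∈ Finset.Icc (d + 1) m, 1 / q k))
    (hge : ((n : ℝ) - d) / (∑ k ∈ Finset.Icc (d + 1) m, 1 / q k) ≤ q (d + 1))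
    (a : ℕ → ℝ) (ha : ∀ i ∈ Finset.Icc 1 m, a i ∈ Set.Icc (0 : ℝ) 1)
    (hsum : (∑ i ∈ Finset.Icc 1 m, a i) = (n : ℝ))
    (hne : (Finset.Icc 1 m).Nonempty)
    (hmax : (Finset.Icc 1 m).sup' hne (fun i => q i * a i)
      = ((n : ℝ) - d) / (∑ k ∈ Finset.Icc (d + 1) m, 1 / q k)) :
    (∀ i ∈ Finset.Icc 1 m, i ≤ d → a i = 1) ∧
    (∀ i ∈ Finset.Icc 1 m, d < i →
      a i = ((n : ℝ) - d) / (q i * ∑ k ∈ Finset.Icc (d + 1) m, 1 / q k)) := by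
  have hdm : d + 1 ≤ m := by omega
  have hdn' : d < n := by omega
  set S := ∑ k ∈ Finset.Icc (d + 1) m, 1 / q k with hS
  have hSpos : 0 < S := by
    apply Finset.sum_pos
    · intro k hk
      rw [Finset.mem_Icc] at hk
      have := hq0 k (Finset.mem_Icc.mpr ⟨by omega, hk.2⟩)
      positivity
    · exact ⟨d + 1, Finset.mem_Icc.mpr ⟨le_refl _, hdm⟩⟩
  set c := ((n : ℝ) - d) / S with hc
  have hnd : (0 : ℝ) < (n : ℝ) - d := by
    have : (d : ℝ) < n := by exact_mod_cast hdn'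
    linarith
  have hub : ∀ i ∈ Finset.Icc 1 m, q i * a i ≤ c := by
    intro i hi
    rw [← hmax]
    exact Finset.le_sup' (fun i => q i * a i) hi
  set b : ℕ → ℝ := fun i => if i ≤ d then (1 : ℝ) else c / q i with hb
  have hab : ∀ i ∈ Finset.Icc 1 m, a i ≤ b i := by
    intro i hi
    by_cases h : i ≤ d
    · simp only [hb, if_pos h]
      exact (ha i hi).2
    · simp only [hb, if_neg h]
      have hqi := hq0 i hi
      rw [le_div_iff₀ hqi, mul_comm]
      exact hub i hi
  have hsplit : ∀ f : ℕ → ℝ, ∑ i ∈ Finset.Icc 1 m, f i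
      = ∑ i ∈ Finset.Icc 1 d, f i + ∑ i ∈ Finset.Icc (d + 1) m, f i := by
    intro f
    rw [show (1 : ℕ) = 0 + 1 from rfl, Finset.Icc_add_one_left_eq_Ioc, Finset.Icc_add_one_left_eq_Ioc,
      show d = d + 0 from rfl, Nat.zero_add, Finset.Icc_add_one_left_eq_Ioc]
    exact (Finset.sum_Ioc_consecutive f (Nat.zero_le d) (by omega)).symm
  have hsumb : ∑ i ∈ Finset.Icc 1 m, b i = (n : ℝ) := by
    rw [hsplit]
    have h1 : ∑ i ∈ Finset.Icc 1 d, b i = (d : ℝ) := by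
      have hbi : ∀ i ∈ Finset.Icc 1 d, b i = 1 := by
        intro i hi
        rw [Finset.mem_Icc] at hi
        simp only [hb, if_pos hi.2]
      rw [Finset.sum_congr rfl hbi, Finset.sum_const, Nat.card_Icc, nsmul_eq_mul,
        mul_one, Nat.add_sub_cancel]
    have h2 : ∑ i ∈ Finset.Icc (d + 1) m, b i = (n : ℝ) - d := by
      have : ∑ i ∈ Finset.Icc (d + 1) m, b i = c * S := by
        rw [hS, Finset.mul_sum]
        apply Finset.sum_congr rfl
        intro i hi
        rw [Finset.mem_Icc] at hi
        simp only [hb, if_neg (by omega : ¬ i ≤ d)]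
        rw [div_eq_mul_one_div]
      rw [this, hc, div_mul_cancel₀ _ (ne_of_gt hSpos)]
    rw [h1, h2]; ring
  have heq : ∀ i ∈ Finset.Icc 1 m, a i = b i := by
    intro i hi
    by_contra h
    have hlt' : ∑ i ∈ Finset.Icc 1 m, a i < ∑ i ∈ Finset.Icc 1 m, b i :=
      Finset.sum_lt_sum hab ⟨i, hi, lt_of_le_of_ne (hab i hi) h⟩
    rw [hsum, hsumb] at hlt'
    exact lt_irrefl _ hlt'
  constructor
  · intro i hi hid
    rw [heq i hi]
    simp [hb, if_pos hid]
  · intro i hi hid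
    rw [heq i hi]
    simp only [hb, if_neg (by omega : ¬ i ≤ d)]
    rw [hc, div_div, mul_comm]
end

section
/- Let f₁,…,f_m span an n-dimensional real Hilbert space, and let a_i = ‖f_i‖. There exists a tight frame (g_i)_{i=1}^m of the space with ‖g_i‖ = a_i for all i if and only if max_i a_i² ≤ (1/n) ∑_{i=1}^m a_i². Equivalently: for positive reals a₁,…,a_m, a tight frame with these norms exists in an n-dimensional Hilbert space iff max_i a_i² ≤ (1/n)∑ a_i². -/
open Finset Module

section
variable {H : Type*} [NormedAddCommGroup H] [InnerProductSpace ℝ H]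

lemma rotate_pair (u v : H) (t : ℝ) (ht : t ∈ Set.uIcc (‖u‖^2) (‖v‖^2)) :
    ∃ u' v' : H, ‖u'‖^2 = t ∧ ‖u'‖^2 + ‖v'‖^2 = ‖u‖^2 + ‖v‖^2 ∧
      ∀ x : H, (inner ℝ x u' : ℝ)^2 + (inner ℝ x v' : ℝ)^2
        = (inner ℝ x u : ℝ)^2 + (inner ℝ x v : ℝ)^2 := by
  set f : ℝ → ℝ := fun θ => ‖Real.cos θ • u + Real.sin θ • v‖^2 with hf
  have hcont : Continuous f := by
    apply Continuous.pow
    exact (((Real.continuous_cos.smul continuous_const).add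
      (Real.continuous_sin.smul continuous_const)).norm)
  have h0 : f 0 = ‖u‖^2 := by simp [hf]
  have h1 : f (Real.pi/2) = ‖v‖^2 := by simp [hf]
  have : t ∈ f '' Set.uIcc 0 (Real.pi/2) := by
    apply intermediate_value_uIcc hcont.continuousOn
    rw [h0, h1]; exact ht
  obtain ⟨θ, -, hθ⟩ := this
  refine ⟨Real.cos θ • u + Real.sin θ • v, -Real.sin θ • u + Real.cos θ • v, hθ, ?_, ?_⟩
  · have hcs := Real.sin_sq_add_cos_sq θ
    have e1 : ∀ (a b : ℝ) (w z : H), ‖a • w + b • z‖^2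
        = a^2*‖w‖^2 + 2*a*b*(inner ℝ w z : ℝ) + b^2*‖z‖^2 := by
      intro a b w z
      rw [← real_inner_self_eq_norm_sq, ← real_inner_self_eq_norm_sq,
        ← real_inner_self_eq_norm_sq]
      simp only [inner_add_add_self, real_inner_smul_left, real_inner_smul_right]
      rw [real_inner_comm z w]; ring
    rw [e1, e1]; nlinarith [real_inner_comm u v]
  · intro x
    have hcs := Real.sin_sq_add_cos_sq θ
    simp only [inner_add_right, real_inner_smul_right]
    nlinarith

end

lemma sum_pair_congr {m : ℕ} {i j : Fin m} (hij : i ≠ j) (f f' : Fin m → ℝ)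
    (hoff : ∀ k, k ≠ i → k ≠ j → f k = f' k) (hpair : f i + f j = f' i + f' j) :
    ∑ k, f k = ∑ k, f' k := by
  have key : ∑ k ∈ ({i, j} : Finset (Fin m)), (f k - f' k) = ∑ k, (f k - f' k) :=
    Finset.sum_subset (Finset.subset_univ _) (by
      intro k _ hk
      simp only [Finset.mem_insert, Finset.mem_singleton, not_or] at hk
      rw [hoff k hk.1 hk.2, sub_self])
  rw [Finset.sum_pair hij] at key
  have h2 : ∑ k, (f k - f' k) = ∑ k, f k - ∑ k, f' k := Finset.sum_sub_distrib _ _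
  rw [h2] at key; linarith

lemma interior_card_le {m : ℕ} (c : Fin m → ℝ) (A : ℝ) (k₀ : Fin m)
    (h : ¬(0 < c k₀ ∧ c k₀ < A)) :
    (Finset.univ.filter (fun k => 0 < c k ∧ c k < A)).card ≤ m - 1 := by
  have hsub : (Finset.univ.filter (fun k => 0 < c k ∧ c k < A)) ⊆ Finset.univ.erase k₀ := by
    intro k hk
    simp only [Finset.mem_filter] at hk
    refine Finset.mem_erase.2 ⟨?_, Finset.mem_univ _⟩
    rintro rfl; exact h hk.2
  have := Finset.card_le_card hsub
  simpa using this

lemma construct_zero {n : ℕ} (H : Type*) [NormedAddCommGroup H] [InnerProductSpace ℝ H]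
    [FiniteDimensional ℝ H] (hdim : finrank ℝ H = n) (A : ℝ) (hA : 0 < A)
    (c : Fin 0 → ℝ) (hsum : ∑ k, c k = n * A) :
    ∃ g : Fin 0 → H, (∀ x : H, ∑ i, (inner ℝ x (g i) : ℝ)^2 = A * ‖x‖^2) ∧
      ∀ k, ‖g k‖^2 = c k := by
  have hn : n = 0 := by
    have h1 : (n : ℝ) * A = 0 := by rw [← hsum]; simp
    rcases mul_eq_zero.1 h1 with h | h
    · exact_mod_cast h
    · exact absurd h hA.ne'
  have : Subsingleton H := finrank_zero_iff.mp (hdim.trans hn)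
  refine ⟨fun k => 0, fun x => ?_, fun k => k.elim0⟩
  have hx : x = 0 := Subsingleton.elim x 0
  subst hx; simp

universe u

lemma construct (μ : ℕ) : ∀ {m n : ℕ} (H : Type u) [NormedAddCommGroup H]
    [InnerProductSpace ℝ H] [FiniteDimensional ℝ H]
    (_ : finrank ℝ H = n) (A : ℝ) (_ : 0 < A) (c : Fin m → ℝ)
    (_ : ∀ k, 0 ≤ c k) (_ : ∀ k, c k ≤ A) (_ : ∑ k, c k = n * A)
    (_ : m + (Finset.univ.filter (fun k => 0 < c k ∧ c k < A)).card ≤ μ),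
    ∃ g : Fin m → H, (∀ x : H, ∑ i, (inner ℝ x (g i) : ℝ)^2 = A * ‖x‖^2) ∧
      ∀ k, ‖g k‖^2 = c k := by
  induction μ with
  | zero =>
    intro m n H _ _ _ hdim A hA c h0 hcA hsum hμ
    have hm : m = 0 := by omega
    subst hm
    exact construct_zero H hdim A hA c hsum
  | succ μ ih =>
    intro m n H _ _ _ hdim A hA c h0 hcA hsum hμ
    by_cases hexA : ∃ k, c k = A
    · -- Case 1 : some c k = A, peel off a dimension
      obtain ⟨k, hk⟩ := hexA
      have hm0 : m ≠ 0 := by rintro rfl; exact k.elim0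
      obtain ⟨m', rfl⟩ := Nat.exists_eq_succ_of_ne_zero hm0
      have hn0 : n ≠ 0 := by
        rintro rfl
        have h1 : c k ≤ ∑ i, c i :=
          Finset.single_le_sum (fun i _ => h0 i) (Finset.mem_univ k)
        rw [hsum, hk] at h1
        simp at h1; linarith
      obtain ⟨n', rfl⟩ := Nat.exists_eq_succ_of_ne_zero hn0
      have hnt : Nontrivial H := by
        rw [← Module.finrank_pos_iff (R := ℝ), hdim]; omega
      obtain ⟨e₀, he₀⟩ := exists_ne (0 : H)
      set e : H := ‖e₀‖⁻¹ • e₀ with hedef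
      have he : ‖e‖ = 1 := by
        rw [hedef, norm_smul, norm_inv, norm_norm]
        exact inv_mul_cancel₀ (norm_ne_zero_iff.2 he₀)
      have hene : e ≠ 0 := by
        intro h; rw [h] at he; simp at he
      have hKdim : finrank ℝ ((ℝ ∙ e)ᗮ : Submodule ℝ H) = n' := by
        have h1 : finrank ℝ (ℝ ∙ e) = 1 := finrank_span_singleton hene
        have h2 := Submodule.finrank_add_finrank_orthogonal (K := (ℝ ∙ e)) (𝕜 := ℝ) (E := H)
        rw [h1, hdim] at h2
        omega
      set c2 : Fin m' → ℝ := fun i => c (k.succAbove i) with hc2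
      have hsum' : ∑ i, c2 i = n' * A := by
        have := Fin.sum_univ_succAbove c k
        rw [hsum, hk] at this
        push_cast at this ⊢
        linarith
      have hcard : (Finset.univ.filter
          (fun i : Fin m' => 0 < c2 i ∧ c2 i < A)).card
          ≤ (Finset.univ.filter (fun k : Fin m'.succ => 0 < c k ∧ c k < A)).card := by
        apply Finset.card_le_card_of_injOn (fun i => k.succAbove i)
        · intro i hi
          simp only [Finset.coe_filter, Set.mem_setOf_eq, Finset.mem_filter, Finset.mem_univ, true_and, hc2] at hi ⊢
          exact hi
        · exact (Fin.succAbove_right_injective (p := k)).injOn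
      obtain ⟨g', hg't, hg'n⟩ := ih ((ℝ ∙ e)ᗮ : Submodule ℝ H) hKdim A hA c2
        (fun i => h0 _) (fun i => hcA _) hsum' (by omega)
      refine ⟨k.insertNth (Real.sqrt A • e) (fun i => ((g' i : H))), ?_, ?_⟩
      · intro x
        rw [Fin.sum_univ_succAbove _ k]
        simp only [Fin.insertNth_apply_same, Fin.insertNth_apply_succAbove]
        have hproj : ∀ i, (inner ℝ x ((g' i : H)) : ℝ)
            = (inner ℝ (Submodule.orthogonalProjectionOnto (ℝ ∙ e)ᗮ x) (g' i) : ℝ) :=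
          fun i => (Submodule.inner_orthogonalProjectionOnto_eq_of_mem_right (K := (ℝ ∙ e)ᗮ) (g' i) x).symm
        have hsum2 : ∑ i, (inner ℝ x ((g' i : H)) : ℝ)^2
            = A * ‖(Submodule.orthogonalProjectionOnto (ℝ ∙ e)ᗮ x : (ℝ ∙ e)ᗮ)‖^2 := by
          rw [← hg't (Submodule.orthogonalProjectionOnto (ℝ ∙ e)ᗮ x)]
          exact Finset.sum_congr rfl (fun i _ => by rw [hproj i])
        have hx : ‖x‖^2 = (inner ℝ e x : ℝ)^2
            + ‖(Submodule.orthogonalProjectionOnto (ℝ ∙ e)ᗮ x : (ℝ ∙ e)ᗮ)‖^2 := by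
          have h3 := Submodule.norm_sq_eq_add_norm_sq_projection x (ℝ ∙ e)
          have h4 : (↑(Submodule.orthogonalProjectionOnto (ℝ ∙ e) x) : H) = (inner ℝ e x : ℝ) • e := by
            rw [Submodule.coe_orthogonalProjectionOnto_apply, Submodule.starProjection_singleton]
            rw [he]; norm_num
          have h5 : ‖Submodule.orthogonalProjectionOnto (ℝ ∙ e) x‖ = |(inner ℝ e x : ℝ)| := by
            rw [← Submodule.norm_coe, h4, norm_smul, he, mul_one, Real.norm_eq_abs]
          rw [h5, sq_abs] at h3
          exact h3
        have hie : (inner ℝ x (Real.sqrt A • e) : ℝ)^2 = A * (inner ℝ e x : ℝ)^2 := by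
          rw [real_inner_smul_right, mul_pow, Real.sq_sqrt hA.le,
            real_inner_comm x e]
        rw [hsum2, hie, hx]
        ring
      · intro k'
        refine Fin.succAboveCases k ?_ ?_ k'
        · rw [Fin.insertNth_apply_same, norm_smul, Real.norm_eq_abs,
            abs_of_nonneg (Real.sqrt_nonneg A), he, mul_one, Real.sq_sqrt hA.le, hk]
        · intro i
          rw [Fin.insertNth_apply_succAbove, Submodule.norm_coe, hg'n i]
    · by_cases hex0 : ∃ k, c k = 0
      · -- Case 2 : some c k = 0, drop that vector
        obtain ⟨k, hk⟩ := hex0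
        have hm0 : m ≠ 0 := by rintro rfl; exact k.elim0
        obtain ⟨m', rfl⟩ := Nat.exists_eq_succ_of_ne_zero hm0
        set c2 : Fin m' → ℝ := fun i => c (k.succAbove i) with hc2
        have hsum' : ∑ i, c2 i = n * A := by
          have := Fin.sum_univ_succAbove c k
          rw [hsum, hk] at this
          linarith
        have hcard : (Finset.univ.filter
            (fun i : Fin m' => 0 < c2 i ∧ c2 i < A)).card
            ≤ (Finset.univ.filter (fun k : Fin m'.succ => 0 < c k ∧ c k < A)).card := by
          apply Finset.card_le_card_of_injOn (fun i => k.succAbove i)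
          · intro i hi
            simp only [Finset.coe_filter, Set.mem_setOf_eq, Finset.mem_filter, Finset.mem_univ, true_and, hc2] at hi ⊢
            exact hi
          · exact (Fin.succAbove_right_injective (p := k)).injOn
        obtain ⟨g', hg't, hg'n⟩ := ih H hdim A hA c2
          (fun i => h0 _) (fun i => hcA _) hsum' (by omega)
        refine ⟨k.insertNth 0 g', ?_, ?_⟩
        · intro x
          rw [Fin.sum_univ_succAbove _ k]
          simp only [Fin.insertNth_apply_same, Fin.insertNth_apply_succAbove,
            inner_zero_right]
          rw [hg't x]; ring
        · intro k'
          refine Fin.succAboveCases k ?_ ?_ k'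
          · rw [Fin.insertNth_apply_same, hk]; simp
          · intro i
            rw [Fin.insertNth_apply_succAbove, hg'n i]
      · -- Case 3 : all entries strictly between 0 and A
        push_neg at hexA hex0
        have hint : ∀ k, 0 < c k ∧ c k < A :=
          fun k => ⟨(h0 k).lt_of_ne' (hex0 k), (hcA k).lt_of_ne (hexA k)⟩
        rcases Nat.lt_or_ge m 2 with hm2 | hm2
        · interval_cases m
          · exact construct_zero H hdim A hA c hsum
          · exfalso
            have h1 : c 0 = n * A := by rw [← hsum]; simp
            have h2 := (hint 0).1
            have h3 := (hint 0).2
            have hn1 : 1 ≤ n := by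
              by_contra h
              have : n = 0 := by omega
              rw [this] at h1; simp at h1; linarith
            have : A ≤ (n : ℝ) * A := by
              nlinarith [(Nat.one_le_cast (α := ℝ)).2 hn1]
            linarith
        · set i : Fin m := ⟨0, by omega⟩
          set j : Fin m := ⟨1, by omega⟩
          have hij : i ≠ j := by simp [i, j, Fin.ext_iff]
          set s : ℝ := c i + c j with hs
          set c' : Fin m → ℝ :=
            Function.update (Function.update c i (min s A)) j (s - min s A) with hc'
          have hc'i : c' i = min s A := by
            rw [hc', Function.update_of_ne hij, Function.update_self]
          have hc'j : c' j = s - min s A := by rw [hc', Function.update_self]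
          have hc'k : ∀ k, k ≠ i → k ≠ j → c' k = c k := by
            intro k hki hkj
            rw [hc', Function.update_of_ne hkj, Function.update_of_ne hki]
          have hs0 : 0 ≤ s := add_nonneg (h0 i) (h0 j)
          have hsA : s < 2 * A := by have := (hint i).2; have := (hint j).2; linarith
          have h0' : ∀ k, 0 ≤ c' k := by
            intro k
            by_cases h1 : k = j
            · subst h1; rw [hc'j]; simp [min_le_left]
            · by_cases h2 : k = i
              · subst h2; rw [hc'i]; exact le_min hs0 hA.le
              · rw [hc'k k h2 h1]; exact h0 k
          have hcA' : ∀ k, c' k ≤ A := by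
            intro k
            by_cases h1 : k = j
            · subst h1; rw [hc'j]
              rcases le_total s A with h | h
              · rw [min_eq_left h]; simp [hA.le]
              · rw [min_eq_right h]; linarith
            · by_cases h2 : k = i
              · subst h2; rw [hc'i]; exact min_le_right _ _
              · rw [hc'k k h2 h1]; exact hcA k
          have hsum' : ∑ k, c' k = n * A := by
            rw [← hsum]
            apply sum_pair_congr hij c' c hc'k
            rw [hc'i, hc'j]; ring
          have hcfull : (Finset.univ.filter (fun k => 0 < c k ∧ c k < A)).card = m := by
            rw [Finset.filter_true_of_mem (fun k _ => hint k)]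
            simp
          have hcard' : (Finset.univ.filter (fun k => 0 < c' k ∧ c' k < A)).card ≤ m - 1 := by
            rcases le_total s A with h | h
            · apply interior_card_le c' A j
              rw [hc'j, min_eq_left h]
              simp
            · apply interior_card_le c' A i
              rw [hc'i, min_eq_right h]
              simp
          obtain ⟨g', hg't, hg'n⟩ := ih H hdim A hA c' h0' hcA' hsum' (by omega)
          have ht : c i ∈ Set.uIcc (‖g' i‖^2) (‖g' j‖^2) := by
            rw [hg'n i, hg'n j, hc'i, hc'j, Set.mem_uIcc]
            rcases le_total s A with h | h
            · rw [min_eq_left h]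
              right
              constructor
              · simp [h0 i]
              · rw [hs]; linarith [h0 j]
            · rw [min_eq_right h]
              right
              constructor
              · have := hcA j; rw [hs]; linarith
              · exact hcA i
          obtain ⟨u', v', hu't, huv, hI⟩ := rotate_pair (g' i) (g' j) (c i) ht
          set g : Fin m → H := Function.update (Function.update g' i u') j v' with hg
          have hgi : g i = u' := by
            rw [hg, Function.update_of_ne hij, Function.update_self]
          have hgj : g j = v' := by rw [hg, Function.update_self]
          have hgk : ∀ k, k ≠ i → k ≠ j → g k = g' k := by
            intro k hki hkj
            rw [hg, Function.update_of_ne hkj, Function.update_of_ne hki]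
          refine ⟨g, ?_, ?_⟩
          · intro x
            rw [← hg't x]
            apply sum_pair_congr hij
            · intro k hki hkj; rw [hgk k hki hkj]
            · rw [hgi, hgj]; exact hI x
          · intro k
            by_cases h1 : k = j
            · subst h1
              have hni := hg'n i
              have hnj := hg'n j
              rw [hgj]
              rw [hc'i] at hni; rw [hc'j] at hnj
              have : ‖u'‖^2 + ‖v'‖^2 = s := by rw [huv, hni, hnj]; ring
              rw [hu't] at this
              rw [hs] at this
              linarith
            · by_cases h2 : k = i
              · subst h2; rw [hgi, hu't]
              · rw [hgk k h2 h1]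
                rw [hg'n k, hc'k k h2 h1]

/-- Fundamental inequality: in an `n`-dimensional real Hilbert space, a tight frame
with prescribed norms `a_i > 0` exists iff `max_i a_i² ≤ (1/n) ∑ a_i²`. -/
theorem tight_frame_exists_iff {H : Type*} [NormedAddCommGroup H]
    [InnerProductSpace ℝ H] [FiniteDimensional ℝ H]
    {n m : ℕ} (hn : 0 < n) (hm : 0 < m) (hdim : Module.finrank ℝ H = n)
    (a : Fin m → ℝ) (ha : ∀ i, 0 < a i) :
    (∃ g : Fin m → H, (∃ A : ℝ, 0 < A ∧ ∀ x : H,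
        (∑ i, (inner ℝ x (g i) : ℝ) ^ 2) = A * ‖x‖ ^ 2) ∧
      ∀ i, ‖g i‖ = a i) ↔
    (∀ i, a i ^ 2 ≤ (1 / (n : ℝ)) * ∑ k, a k ^ 2) := by
  have hnR : (0:ℝ) < n := by exact_mod_cast hn
  constructor
  · rintro ⟨g, ⟨A, hA, htight⟩, hnorm⟩
    -- trace identity: n * A = ∑ a_k ^ 2
    have b : OrthonormalBasis (Fin n) ℝ H := hdim ▸ stdOrthonormalBasis ℝ H
    have hparseval : ∀ i, ∑ j, (inner ℝ (b j) (g i) : ℝ)^2 = a i ^ 2 := by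
      intro i
      have h1 := b.sum_inner_mul_inner (g i) (g i)
      have h2 : ∀ j, (inner ℝ (g i) (b j) : ℝ) * (inner ℝ (b j) (g i) : ℝ)
          = (inner ℝ (b j) (g i) : ℝ)^2 := by
        intro j; rw [real_inner_comm (g i) (b j)]; ring
      rw [Finset.sum_congr rfl (fun j _ => h2 j)] at h1
      rw [h1, real_inner_self_eq_norm_sq, hnorm i]
    have htrace : (n:ℝ) * A = ∑ k, a k ^ 2 := by
      have h1 : ∑ j : Fin n, ∑ i : Fin m, (inner ℝ (b j) (g i) : ℝ)^2
          = ∑ j : Fin n, A * ‖b j‖^2 :=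
        Finset.sum_congr rfl (fun j _ => htight (b j))
      rw [Finset.sum_comm] at h1
      rw [Finset.sum_congr rfl (fun i _ => hparseval i)] at h1
      have h2 : ∀ j : Fin n, A * ‖b j‖^2 = A := fun j => by
        rw [b.orthonormal.1 j]; ring
      rw [Finset.sum_congr rfl (fun j _ => h2 j)] at h1
      simp only [Finset.sum_const, Finset.card_univ, Fintype.card_fin, nsmul_eq_mul] at h1
      linarith
    intro i
    -- a i ^ 2 ≤ A
    have hle : a i ^ 2 ≤ A := by
      have h1 := htight (g i)
      have h2 : ((inner ℝ (g i) (g i) : ℝ))^2 ≤ ∑ j, (inner ℝ (g i) (g j) : ℝ)^2 :=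
        Finset.single_le_sum (f := fun j => (inner ℝ (g i) (g j) : ℝ)^2)
          (fun j _ => sq_nonneg _) (Finset.mem_univ i)
      rw [h1, real_inner_self_eq_norm_sq, hnorm i] at h2
      have hai := ha i
      nlinarith
    rw [← htrace]
    have hc : (1/(n:ℝ)) * ((n:ℝ) * A) = A := by field_simp
    rw [hc]
    exact hle
  · intro hub
    set A : ℝ := (1 / (n:ℝ)) * ∑ k, a k ^ 2 with hAdef
    have hA : 0 < A := by
      apply mul_pos (by positivity)
      have h0 : (0:ℝ) < a ⟨0, hm⟩ ^ 2 := pow_pos (ha _) 2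
      exact Finset.sum_pos' (fun k _ => sq_nonneg _)
        ⟨(⟨0, hm⟩ : Fin m), Finset.mem_univ _, h0⟩
    set c : Fin m → ℝ := fun k => a k ^ 2 with hcdef
    have hsum : ∑ k, c k = n * A := by
      rw [hAdef, hcdef]; field_simp
    obtain ⟨g, htight, hnorm⟩ := construct (2*m) H hdim A hA c
      (fun k => sq_nonneg _) (fun k => hub k) hsum
      (by
        have h := Finset.card_filter_le (Finset.univ : Finset (Fin m))
          (fun k => 0 < c k ∧ c k < A)
        simp only [Finset.card_univ, Fintype.card_fin] at h
        omega)
    refine ⟨g, ⟨A, hA, htight⟩, fun i => ?_⟩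
    have h1 := hnorm i
    have h2 := congrArg Real.sqrt h1
    rwa [Real.sqrt_sq (norm_nonneg _), hcdef, Real.sqrt_sq (ha i).le] at h2
end

section
/- Let 0 < p₁ ≤ ⋯ ≤ p_m < 1, P = ∑ p_i, and p̃_i = p_i ∏_{k≠i}(1−p_k). Then ∑_{i=1}^m p̃_i (1/(m−1))(1 − p_i/P) ≤ (1/m) ∑_{i=1}^m p̃_i; equivalently, E_PM ≤ E_CM where E_PM = (n/((m−1)∑ p̃_i)) ∑ p̃_i (1 − p_i/P) and E_CM = n/m. -/
/-- `E_PM ≤ E_CM`: with `p̃_i = p_i ∏_{k≠i}(1−p_k)` and `P = ∑ p_i`,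
`∑ p̃_i (1/(m−1))(1 − p_i/P) ≤ (1/m) ∑ p̃_i`. -/
theorem E_PM_le_E_CM {m : ℕ} (hm : 2 ≤ m) (p : ℕ → ℝ)
    (hp0 : ∀ i ∈ Finset.Icc 1 m, 0 < p i) (hp1 : ∀ i ∈ Finset.Icc 1 m, p i < 1)
    (hmono : ∀ i ∈ Finset.Icc 1 m, ∀ j ∈ Finset.Icc 1 m, i ≤ j → p i ≤ p j) :
    ∑ i ∈ Finset.Icc 1 m,
        (p i * ∏ k ∈ (Finset.Icc 1 m).erase i, (1 - p k)) *
          ((1 / ((m : ℝ) - 1)) * (1 - p i / ∑ k ∈ Finset.Icc 1 m, p k)) ≤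
      (1 / (m : ℝ)) * ∑ i ∈ Finset.Icc 1 m,
        p i * ∏ k ∈ (Finset.Icc 1 m).erase i, (1 - p k) := by
  set s := Finset.Icc 1 m with hs
  set P := ∑ k ∈ s, p k with hPdef
  set f := fun i => p i * ∏ k ∈ s.erase i, (1 - p k) with hf
  set g := fun i => (1 / ((m : ℝ) - 1)) * (1 - p i / P) with hg
  have hmR : (2 : ℝ) ≤ (m : ℝ) := by exact_mod_cast hm
  have hm1 : (0 : ℝ) < (m : ℝ) - 1 := by linarith
  have hmpos : (0 : ℝ) < (m : ℝ) := by linarith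
  have hcard : s.card = m := by simp [hs]
  have hsne : s.Nonempty := ⟨1, by simp [hs]; omega⟩
  have hPpos : 0 < P := Finset.sum_pos hp0 hsne
  set Q := ∏ k ∈ s, (1 - p k) with hQdef
  have hQpos : 0 < Q := Finset.prod_pos (fun k hk => by have := hp1 k hk; linarith)
  have key : ∀ i ∈ s, f i = Q * (p i / (1 - p i)) := by
    intro i hi
    have h1 : (0 : ℝ) < 1 - p i := by have := hp1 i hi; linarith
    have hQi : (1 - p i) * ∏ k ∈ s.erase i, (1 - p k) = Q :=
      Finset.mul_prod_erase s (fun k => 1 - p k) hi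
    field_simp [hf]
    rw [← hQi]; ring
  have hanti : AntivaryOn f g ↑s := by
    intro i hi j hj hlt
    rw [Finset.mem_coe] at hi hj
    have hpj : p j < p i := by
      have h1 : 1 - p i / P < 1 - p j / P :=
        lt_of_mul_lt_mul_left hlt (by positivity)
      have h2 : p j / P < p i / P := by linarith
      exact (div_lt_div_iff_of_pos_right hPpos).mp h2
    rw [key i hi, key j hj]
    have h1i : (0 : ℝ) < 1 - p i := by have := hp1 i hi; linarith
    have h1j : (0 : ℝ) < 1 - p j := by have := hp1 j hj; linarith
    have h0j : 0 < p j := hp0 j hj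
    have : p j / (1 - p j) ≤ p i / (1 - p i) := by
      rw [div_le_div_iff₀ h1j h1i]; nlinarith
    nlinarith
  have cheby := hanti.card_mul_sum_le_sum_mul_sum
  rw [hcard] at cheby
  have hgsum : ∑ i ∈ s, g i = 1 := by
    have h1 : ∑ i ∈ s, (1 - p i / P) = (m : ℝ) - 1 := by
      rw [Finset.sum_sub_distrib, Finset.sum_const, hcard, ← Finset.sum_div, ← hPdef]
      field_simp
      simp
    simp only [hg, ← Finset.mul_sum, h1]
    field_simp
  rw [hgsum, mul_one] at cheby
  show ∑ i ∈ s, f i * g i ≤ 1 / (m : ℝ) * ∑ i ∈ s, f i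
  rw [show (1 / (m : ℝ)) * ∑ i ∈ s, f i = (∑ i ∈ s, f i) / m by ring,
    le_div_iff₀ hmpos]
  linarith [cheby]
end

section
/- Let 0 < p₁ ≤ ⋯ ≤ p_m < 1, p̃_i = p_i ∏_{k≠i}(1−p_k), and d < m with m − d ≥ 2. Then ∑_{i=d+1}^m p̃_i (1 − p_i/∑_{k=d+1}^m p_k) ≥ (m−d)(m−d−1) / (∑_{i=d+1}^m 1/p̃_i). -/
/-- Chebyshev application:
`∑_{i=d+1}^m p̃_i (1 − p_i/∑_{k>d} p_k) ≥ (m−d)(m−d−1)/∑_{i>d} 1/p̃_i`. -/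
theorem tail_chebyshev_bound {m d : ℕ} (hdm : d + 2 ≤ m) (p : ℕ → ℝ)
    (hp0 : ∀ i ∈ Finset.Icc 1 m, 0 < p i) (hp1 : ∀ i ∈ Finset.Icc 1 m, p i < 1)
    (hmono : ∀ i ∈ Finset.Icc 1 m, ∀ j ∈ Finset.Icc 1 m, i ≤ j → p i ≤ p j) :
    ((m : ℝ) - d) * ((m : ℝ) - d - 1) /
        (∑ i ∈ Finset.Icc (d + 1) m,
          1 / (p i * ∏ k ∈ (Finset.Icc 1 m).erase i, (1 - p k))) ≤
      ∑ i ∈ Finset.Icc (d + 1) m,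
        (p i * ∏ k ∈ (Finset.Icc 1 m).erase i, (1 - p k)) *
          (1 - p i / ∑ k ∈ Finset.Icc (d + 1) m, p k) := by
  classical
  set S : Finset ℕ := Finset.Icc (d + 1) m with hS
  have hsub : S ⊆ Finset.Icc 1 m := by
    intro i hi
    simp only [hS, Finset.mem_Icc] at hi ⊢
    omega
  set q : ℕ → ℝ := fun i => p i * ∏ k ∈ (Finset.Icc 1 m).erase i, (1 - p k) with hq
  set P : ℝ := ∑ k ∈ S, p k with hP
  -- positivity facts
  have h1p : ∀ k ∈ Finset.Icc 1 m, 0 < 1 - p k := fun k hk => by linarith [hp1 k hk]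
  have hqpos : ∀ i ∈ S, 0 < q i := by
    intro i hi
    refine mul_pos (hp0 i (hsub hi)) (Finset.prod_pos ?_)
    intro k hk
    exact h1p k (Finset.mem_of_mem_erase hk)
  have hPpos : 0 < P := by
    refine Finset.sum_pos (fun k hk => hp0 k (hsub hk)) ?_
    refine ⟨m, ?_⟩
    simp only [hS, Finset.mem_Icc]; omega
  -- P ≥ p i + p j for distinct i j in S
  have hPij : ∀ i ∈ S, ∀ j ∈ S, i ≠ j → p i + p j ≤ P := by
    intro i hi j hj hij
    have : ∑ k ∈ ({i, j} : Finset ℕ), p k ≤ P := by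
      refine Finset.sum_le_sum_of_subset_of_nonneg ?_ ?_
      · intro k hk
        simp only [Finset.mem_insert, Finset.mem_singleton] at hk
        rcases hk with rfl | rfl <;> assumption
      · intro k hk _; exact (hp0 k (hsub hk)).le
    rwa [Finset.sum_pair hij] at this
  -- rewrite q i using the full product
  set Pi : ℝ := ∏ k ∈ Finset.Icc 1 m, (1 - p k) with hPi
  have hPipos : 0 < Pi := Finset.prod_pos h1p
  have hqeq : ∀ i ∈ S, q i = p i * Pi / (1 - p i) := by
    intro i hi
    have hi' := hsub hi
    have : (1 - p i) * ∏ k ∈ (Finset.Icc 1 m).erase i, (1 - p k) = Pi :=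
      Finset.mul_prod_erase (Finset.Icc 1 m) (fun k => 1 - p k) hi'
    have h1 : (0 : ℝ) < 1 - p i := h1p i hi'
    field_simp [hq]
    nlinarith [this]
  -- q is monotone on S
  have hqmono : ∀ i ∈ S, ∀ j ∈ S, i ≤ j → q i ≤ q j := by
    intro i hi j hj hij
    have hi' := hsub hi; have hj' := hsub hj
    rw [hqeq i hi, hqeq j hj]
    have h1i := h1p i hi'; have h1j := h1p j hj'
    have hpij := hmono i hi' j hj' hij
    rw [div_le_div_iff₀ h1i h1j]
    nlinarith [hp0 i hi', hp0 j hj', hPipos]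
  -- a is monotone on S
  set a : ℕ → ℝ := fun i => q i * (1 - p i / P) with ha
  have hamono : ∀ i ∈ S, ∀ j ∈ S, i ≤ j → a i ≤ a j := by
    intro i hi j hj hij
    rcases eq_or_lt_of_le hij with rfl | hlt
    · exact le_rfl
    have hi' := hsub hi; have hj' := hsub hj
    have h1i := h1p i hi'; have h1j := h1p j hj'
    have hpij := hmono i hi' j hj' hij
    have hsum := hPij i hi j hj (Nat.ne_of_lt hlt)
    have h0i := hp0 i hi'; have h0j := hp0 j hj'
    simp only [ha]
    rw [hqeq i hi, hqeq j hj]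
    rw [div_mul_eq_mul_div, div_mul_eq_mul_div, div_le_div_iff₀ h1i h1j]
    have key : p i * (1 - p i / P) * (1 - p j) ≤ p j * (1 - p j / P) * (1 - p i) := by
      have key2 : p i * (P - p i) * (1 - p j) ≤ p j * (P - p j) * (1 - p i) := by
        nlinarith [mul_nonneg (sub_nonneg.2 hpij)
          (by nlinarith : (0:ℝ) ≤ P - p i - p j + p i * p j)]
      have h1 : (1 - p i / P) = (P - p i) / P := by field_simp
      have h2 : (1 - p j / P) = (P - p j) / P := by field_simp
      rw [h1, h2,
        show p i * ((P - p i) / P) * (1 - p j) = p i * (P - p i) * (1 - p j) / P from by ring,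
        show p j * ((P - p j) / P) * (1 - p i) = p j * (P - p j) * (1 - p i) / P from by ring]
      exact div_le_div_of_nonneg_right key2 hPpos.le
    nlinarith [hPipos, key]
  -- b is antitone on S
  set b : ℕ → ℝ := fun i => 1 / q i with hb
  have hbanti : ∀ i ∈ S, ∀ j ∈ S, i ≤ j → b j ≤ b i := by
    intro i hi j hj hij
    exact one_div_le_one_div_of_le (hqpos i hi) (hqmono i hi j hj hij)
  -- AntivaryOn a b
  have hav : AntivaryOn a b (S : Set ℕ) := by
    intro i hi j hj hlt
    simp only [Finset.coe_mem, Finset.mem_coe] at hi hj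
    rcases le_total i j with h | h
    · exact absurd (hbanti i hi j hj h) (not_le.2 hlt)
    · exact hamono j hj i hi h
  have cheb := hav.card_mul_sum_le_sum_mul_sum
  -- compute ∑ a * b
  have habsum : ∑ i ∈ S, a i * b i = (S.card : ℝ) - 1 := by
    have : ∀ i ∈ S, a i * b i = 1 - p i / P := by
      intro i hi
      have := hqpos i hi
      simp only [ha, hb]
      field_simp [ha, hb]
    rw [Finset.sum_congr rfl this, Finset.sum_sub_distrib, Finset.sum_const,
      ← Finset.sum_div, ← hP, div_self (ne_of_gt hPpos)]
    simp
  rw [habsum] at cheb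
  -- card
  have hcard : S.card = m - d := by
    simp only [hS, Nat.card_Icc]; omega
  have hcardR : (S.card : ℝ) = (m : ℝ) - d := by
    rw [hcard]
    have : (d : ℝ) ≤ m := by exact_mod_cast Nat.le_of_lt (by omega)
    push_cast [Nat.cast_sub (by omega : d ≤ m)]
    ring
  -- ∑ b > 0
  have hbpos : 0 < ∑ i ∈ S, b i := by
    refine Finset.sum_pos (fun i hi => ?_) ?_
    · exact one_div_pos.2 (hqpos i hi)
    · exact ⟨m, by simp only [hS, Finset.mem_Icc]; omega⟩
  rw [div_le_iff₀ hbpos]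
  calc ((m : ℝ) - d) * ((m : ℝ) - d - 1) = (S.card : ℝ) * ((S.card : ℝ) - 1) := by
        rw [hcardR]
    _ ≤ (∑ i ∈ S, a i) * ∑ i ∈ S, b i := cheb
    _ = (∑ i ∈ S, q i * (1 - p i / P)) * ∑ i ∈ S, 1 / q i := rfl
end
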